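/- arXiv:2208.01856 — 2 statements merged into one kernel-verified Lean document; each statement's English description precedes it below -/
import Mathlib

section
/- The cubic polynomial p(k) = 6k³ + 3Bk² + (3A² + 6ξ)k − 3A²B/2 + 3ξB has three distinct real roots whenever its associated discriminant expression Λ(ξ) = ξ³/27 + (A²/18 + B²/54)ξ² + (A⁴/36 − 7A²B²/108 + B⁴/432)ξ + A⁶/216 − A²B⁴/864 + 11A⁴B²/432 is negative. -/
lemma cubic_pos_of_large (b c d k : ℝ)
    (hk : 1 + (3 * |b| + |c| + |d|) / 6 ≤ k) :
    0 < 6 * k ^ 3 + 3 * b * k ^ 2 + c * k + d := by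
  have hb := abs_nonneg b
  have hc := abs_nonneg c
  have hd := abs_nonneg d
  have hk1 : 1 ≤ k := by linarith
  have hkk : k ≤ k ^ 2 := by nlinarith
  have hk2 : 1 ≤ k ^ 2 := by nlinarith
  have h1 : (-|b|) * k ^ 2 ≤ b * k ^ 2 :=
    mul_le_mul_of_nonneg_right (neg_abs_le b) (sq_nonneg k)
  have h2a : (-|c|) * k ≤ c * k :=
    mul_le_mul_of_nonneg_right (neg_abs_le c) (by linarith)
  have h2b : |c| * k ≤ |c| * k ^ 2 := mul_le_mul_of_nonneg_left hkk hc
  have h3 : -|d| ≤ d := neg_abs_le d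
  have h3b : |d| * 1 ≤ |d| * k ^ 2 := mul_le_mul_of_nonneg_left hk2 hd
  have h4 : (3 * |b| + |c| + |d| + 6) * k ^ 2 ≤ 6 * k * k ^ 2 :=
    mul_le_mul_of_nonneg_right (by linarith) (sq_nonneg k)
  nlinarith [h1, h2a, h2b, h3, h3b, h4, hk2]

lemma cubic_neg_of_large (b c d k : ℝ)
    (hk : k ≤ -(1 + (3 * |b| + |c| + |d|) / 6)) :
    6 * k ^ 3 + 3 * b * k ^ 2 + c * k + d < 0 := by
  have h := cubic_pos_of_large (-b) c (-d) (-k)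
    (by rw [abs_neg, abs_neg]; linarith)
  nlinarith [h]

set_option maxHeartbeats 1000000 in
theorem cubic_three_real_roots (A B ξ : ℝ) (hA : 0 < A)
    (hΛ : ξ ^ 3 / 27 + (A ^ 2 / 18 + B ^ 2 / 54) * ξ ^ 2
        + (A ^ 4 / 36 - 7 * A ^ 2 * B ^ 2 / 108 + B ^ 4 / 432) * ξ
        + A ^ 6 / 216 - A ^ 2 * B ^ 4 / 864 + 11 * A ^ 4 * B ^ 2 / 432 < 0) :
    ∃ r₁ r₂ r₃ : ℝ, r₁ < r₂ ∧ r₂ < r₃ ∧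
      (∀ r ∈ ({r₁, r₂, r₃} : Set ℝ),
        6 * r ^ 3 + 3 * B * r ^ 2 + (3 * A ^ 2 + 6 * ξ) * r - 3 * A ^ 2 * B / 2 + 3 * ξ * B = 0) := by
  set p : ℝ → ℝ := fun r =>
    6 * r ^ 3 + 3 * B * r ^ 2 + (3 * A ^ 2 + 6 * ξ) * r - 3 * A ^ 2 * B / 2 + 3 * ξ * B with hp
  have hcont : Continuous p := by fun_prop
  set α : ℝ := B ^ 3 / 18 - 2 * A ^ 2 * B + 2 * ξ * B with hα
  set β : ℝ := A ^ 2 / 3 - B ^ 2 / 18 + 2 * ξ / 3 with hβ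
  set D : ℝ := B ^ 2 - 6 * A ^ 2 - 12 * ξ with hDdef
  -- key identity: α² - β² D = 144 Λ < 0
  have hkey : α ^ 2 - β ^ 2 * D =
      144 * (ξ ^ 3 / 27 + (A ^ 2 / 18 + B ^ 2 / 54) * ξ ^ 2
        + (A ^ 4 / 36 - 7 * A ^ 2 * B ^ 2 / 108 + B ^ 4 / 432) * ξ
        + A ^ 6 / 216 - A ^ 2 * B ^ 4 / 864 + 11 * A ^ 4 * B ^ 2 / 432) := by
    rw [hα, hβ, hDdef]; ring
  have hD : 0 < D := by
    by_contra h
    push_neg at h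
    nlinarith [sq_nonneg α, sq_nonneg β, mul_nonneg (sq_nonneg β) (neg_nonneg.2 h)]
  set s : ℝ := Real.sqrt D with hsdef
  have hs : s ^ 2 = D := Real.sq_sqrt hD.le
  have hspos : 0 < s := Real.sqrt_pos.2 hD
  set km : ℝ := (-B - s) / 6 with hkm
  set kp : ℝ := (-B + s) / 6 with hkp
  have hmm : km < kp := by rw [hkm, hkp]; linarith
  have hu : p km = α - β * s := by
    rw [hp, hkm, hα, hβ]
    linear_combination (-s / 36) * hs
  have hv : p kp = α + β * s := by
    rw [hp, hkp, hα, hβ]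
    linear_combination (s / 36) * hs
  have hprod : p km * p kp < 0 := by
    rw [hu, hv]
    have h2 : (α - β * s) * (α + β * s) = α ^ 2 - β ^ 2 * D := by
      linear_combination (-(β ^ 2)) * hs
    rw [h2, hkey]; linarith
  have hβneg : β = -D / 18 := by rw [hβ, hDdef]; ring
  have hdiff : p kp < p km := by
    rw [hu, hv, hβneg]
    have h1 : 0 < D * s := mul_pos hD hspos
    nlinarith [h1]
  have hu0 : 0 < p km := by
    by_contra h
    push_neg at h
    have h2 : p kp ≤ 0 := by linarith
    nlinarith [mul_nonneg (neg_nonneg.2 h2) (neg_nonneg.2 h)]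
  have hv0 : p kp < 0 := by
    by_contra h
    push_neg at h
    nlinarith [mul_nonneg (le_trans h hdiff.le) h]
  -- bounds for large |k|
  set C : ℝ := 1 + (3 * |B| + |3 * A ^ 2 + 6 * ξ| + |(-(3 * A ^ 2 * B / 2)) + 3 * ξ * B|) / 6
    with hC
  have hC1 : 1 ≤ C := by
    rw [hC]
    have := abs_nonneg B
    have := abs_nonneg (3 * A ^ 2 + 6 * ξ)
    have := abs_nonneg ((-(3 * A ^ 2 * B / 2)) + 3 * ξ * B)
    linarith
  have hform : ∀ k : ℝ, p k
      = 6 * k ^ 3 + 3 * B * k ^ 2 + (3 * A ^ 2 + 6 * ξ) * k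
        + ((-(3 * A ^ 2 * B / 2)) + 3 * ξ * B) := by
    intro k; rw [hp]; ring
  set a : ℝ := min (km - 1) (-C) with ha
  set c : ℝ := max (kp + 1) C with hc
  have haneg : p a < 0 := by
    rw [hform a]
    exact cubic_neg_of_large B (3 * A ^ 2 + 6 * ξ) ((-(3 * A ^ 2 * B / 2)) + 3 * ξ * B) a
      (le_trans (min_le_right _ _) (by rw [hC]))
  have hcpos : 0 < p c := by
    rw [hform c]
    exact cubic_pos_of_large B (3 * A ^ 2 + 6 * ξ) ((-(3 * A ^ 2 * B / 2)) + 3 * ξ * B) c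
      (le_trans (by rw [hC]) (le_max_right _ _))
  have halt : a < km := lt_of_le_of_lt (min_le_left _ _) (by linarith)
  have hclt : kp < c := lt_of_lt_of_le (by linarith) (le_max_left _ _)
  -- three roots by IVT
  obtain ⟨r₁, hr₁mem, hr₁⟩ := intermediate_value_Ioo halt.le hcont.continuousOn
    (Set.mem_Ioo.2 ⟨haneg, hu0⟩)
  obtain ⟨r₂, hr₂mem, hr₂⟩ := intermediate_value_Ioo' hmm.le hcont.continuousOn
    (Set.mem_Ioo.2 ⟨hv0, hu0⟩)
  obtain ⟨r₃, hr₃mem, hr₃⟩ := intermediate_value_Ioo hclt.le hcont.continuousOn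
    (Set.mem_Ioo.2 ⟨hv0, hcpos⟩)
  refine ⟨r₁, r₂, r₃, lt_trans hr₁mem.2 hr₂mem.1, lt_trans hr₂mem.2 hr₃mem.1, ?_⟩
  intro r hr
  rcases hr with h | h | h <;> subst h
  · exact hr₁
  · exact hr₂
  · exact hr₃
end

section
/- For real k with k + B/2 > 0, the quantity Ω(k) := (2k² − Bk + B²/2 − A²)·X(k) with X(k) = √((k+B/2)² + A²) satisfies Ω(k) − 2k³ − (B³ − 6A²B)/4 → 0 as k → +∞. -/
theorem Omega_asymptotics (A B : ℝ) (hA : 0 < A) :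
    let X : ℝ → ℝ := fun k => Real.sqrt ((k + B / 2) ^ 2 + A ^ 2)
    let Ω : ℝ → ℝ := fun k => (2 * k ^ 2 - B * k + B ^ 2 / 2 - A ^ 2) * X k
    Filter.Tendsto (fun k => Ω k - 2 * k ^ 3 - (B ^ 3 - 6 * A ^ 2 * B) / 4)
      Filter.atTop (nhds 0) := by
  intro X Ω
  set C : ℝ := A ^ 2 * |3 * B ^ 2 / 2 - A ^ 2| + A ^ 4 with hCdef
  have hC0 : 0 ≤ C := by positivity
  have hg : Filter.Tendsto (fun k : ℝ => C / (k + B / 2)) Filter.atTop (nhds 0) :=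
    Filter.Tendsto.div_atTop tendsto_const_nhds
      (Filter.tendsto_atTop_add_const_right _ _ Filter.tendsto_id)
  apply squeeze_zero_norm' _ hg
  filter_upwards [Filter.eventually_ge_atTop (max (1 - B / 2) (max B (-2 * B)))] with k hk
  have hu1 : 1 ≤ k + B / 2 := by
    have := le_trans (le_max_left _ _) hk; linarith
  have huB : 3 * B / 2 ≤ k + B / 2 := by
    have h := le_trans (le_max_right _ _) hk
    have := le_trans (le_max_left _ _) h; linarith
  have hu0 : (0:ℝ) < k + B / 2 := lt_of_lt_of_le one_pos hu1
  have hXsq : X k ^ 2 = (k + B / 2) ^ 2 + A ^ 2 := Real.sq_sqrt (by positivity)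
  have hXu : k + B / 2 ≤ X k := by
    calc k + B / 2 = Real.sqrt ((k + B / 2) ^ 2) := (Real.sqrt_sq hu0.le).symm
    _ ≤ X k := Real.sqrt_le_sqrt (by nlinarith)
  have hS : 0 < X k + (k + B / 2) := by linarith
  have hcl : (Ω k - 2 * k ^ 3 - (B ^ 3 - 6 * A ^ 2 * B) / 4) * (X k + (k + B / 2)) ^ 2 =
      A ^ 2 * (3 * B ^ 2 / 2 - A ^ 2) * (X k + (k + B / 2)) - A ^ 4 * ((k + B / 2) - 3 * B / 2) := by
    show ((2 * k ^ 2 - B * k + B ^ 2 / 2 - A ^ 2) * X k - 2 * k ^ 3 - (B ^ 3 - 6 * A ^ 2 * B) / 4) * (X k + (k + B / 2)) ^ 2 = _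
    linear_combination ((2 * k ^ 2 - B * k + B ^ 2 / 2 - A ^ 2) * X k
      + 2 * (2 * k ^ 2 - B * k + B ^ 2 / 2 - A ^ 2) * (k + B / 2)
      - (2 * k ^ 3 + (B ^ 3 - 6 * A ^ 2 * B) / 4)) * hXsq
  have hval : Ω k - 2 * k ^ 3 - (B ^ 3 - 6 * A ^ 2 * B) / 4 =
      (A ^ 2 * (3 * B ^ 2 / 2 - A ^ 2) * (X k + (k + B / 2)) - A ^ 4 * ((k + B / 2) - 3 * B / 2))
        / (X k + (k + B / 2)) ^ 2 := by
    rw [eq_div_iff (by positivity)]; exact hcl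
  rw [hval, Real.norm_eq_abs, abs_div, abs_of_pos (by positivity : (0:ℝ) < (X k + (k + B / 2)) ^ 2)]
  rw [div_le_div_iff₀ (by positivity) hu0]
  have hnum : |A ^ 2 * (3 * B ^ 2 / 2 - A ^ 2) * (X k + (k + B / 2)) - A ^ 4 * ((k + B / 2) - 3 * B / 2)|
      ≤ C * (X k + (k + B / 2)) := by
    calc |A ^ 2 * (3 * B ^ 2 / 2 - A ^ 2) * (X k + (k + B / 2)) - A ^ 4 * ((k + B / 2) - 3 * B / 2)|
        ≤ |A ^ 2 * (3 * B ^ 2 / 2 - A ^ 2) * (X k + (k + B / 2))| + |A ^ 4 * ((k + B / 2) - 3 * B / 2)| :=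
          abs_sub _ _
      _ ≤ C * (X k + (k + B / 2)) := by
          rw [abs_mul, abs_mul, abs_mul, abs_of_pos hS, abs_of_nonneg (by linarith : (0:ℝ) ≤ (k + B / 2) - 3 * B / 2)]
          have h1 : |A ^ 2| = A ^ 2 := abs_of_pos (by positivity)
          have h2 : |A ^ 4| = A ^ 4 := abs_of_pos (by positivity)
          rw [h1, h2, hCdef]
          have huB2 : k + B / 2 - 3 * B / 2 ≤ X k + (k + B / 2) := by
            have h := le_trans (le_max_right _ _) hk
            have := le_trans (le_max_right _ _) h
            linarith
          have hterm : A ^ 4 * (k + B / 2 - 3 * B / 2) ≤ A ^ 4 * (X k + (k + B / 2)) :=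
            mul_le_mul_of_nonneg_left huB2 (by positivity)
          nlinarith [hterm]
  calc |A ^ 2 * (3 * B ^ 2 / 2 - A ^ 2) * (X k + (k + B / 2)) - A ^ 4 * ((k + B / 2) - 3 * B / 2)| * (k + B / 2)
      ≤ C * (X k + (k + B / 2)) * (k + B / 2) := by
        apply mul_le_mul_of_nonneg_right hnum hu0.le
    _ ≤ C * (X k + (k + B / 2)) ^ 2 := by
        have : C * (X k + (k + B / 2)) * (k + B / 2) ≤ C * (X k + (k + B / 2)) * (X k + (k + B / 2)) :=
          mul_le_mul_of_nonneg_left (by linarith) (by positivity)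
        nlinarith [this]
end
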